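/- For m ≥ 2, the determinants P_{m,m-1}(q) and P_{m,m-2}(q) are equal, where P_{m,k}(q) = det_{0≤i,j≤k-1}( h_{m-k-i+2j-1}({1,q}^{i-j+2}) ). -/

import Mathlib

/-- `hh q r s n` is the complete homogeneous symmetric function `h_n({1}^r, {q}^s)`. -/
noncomputable def hh {K : Type*} [CommSemiring K] (q : K) (r s : ℕ) (n : ℕ) : K :=
  PowerSeries.coeff n
    ((PowerSeries.mk fun _ => (1 : K)) ^ r * (PowerSeries.mk fun k => q ^ k) ^ s)

/-- `h_n({1}^r,{q}^s)` with integer arguments, zero when `r < 0`, `s < 0` or `n < 0`. -/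
noncomputable def hz {K : Type*} [CommSemiring K] (q : K) (r s n : ℤ) : K :=
  if 0 ≤ r ∧ 0 ≤ s ∧ 0 ≤ n then hh q r.toNat s.toNat n.toNat else 0

/-- The q-Faulhaber coefficient
`P_{m,k}(q) = det_{0≤i,j≤k-1}( h_{m-k-i+2j-1}({1,q}^{i-j+2}) )`, over `ℤ[q]`. -/
noncomputable def Pdet (m k : ℕ) : Polynomial ℤ :=
  Matrix.det (Matrix.of fun i j : Fin k =>
    hz (Polynomial.X : Polynomial ℤ) ((i : ℤ) - j + 2) ((i : ℤ) - j + 2)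
      ((m : ℤ) - k - i + 2 * j - 1))

lemma hh_zero {K : Type*} [CommSemiring K] (q : K) (r s : ℕ) : hh q r s 0 = 1 := by
  simp [hh, PowerSeries.coeff_zero_eq_constantCoeff, map_mul, map_pow,
    PowerSeries.constantCoeff_mk]

/-- for `m ≥ 2`, `P_{m,m-1}(q) = P_{m,m-2}(q)`. -/
theorem Pdet_top_eq (m : ℕ) (hm : 2 ≤ m) : Pdet m (m - 1) = Pdet m (m - 2) := by
  obtain ⟨n, rfl⟩ := Nat.exists_eq_add_of_le hm
  have h1 : 2 + n - 1 = n + 1 := by omega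
  have h2 : 2 + n - 2 = n := by omega
  unfold Pdet
  rw [h1, h2, Matrix.det_succ_column_zero, Finset.sum_eq_single 0]
  · simp only [Matrix.of_apply, Fin.val_zero, Nat.cast_zero, pow_zero, one_mul,
      Fin.succAbove_zero]
    have e0 : ((2 + n : ℕ) : ℤ) - ((n + 1 : ℕ) : ℤ) - 0 + 2 * 0 - 1 = 0 := by
      push_cast; ring
    rw [e0]
    have hv : hz (Polynomial.X : Polynomial ℤ) ((0:ℤ) - 0 + 2) ((0:ℤ) - 0 + 2) 0 = 1 := by
      norm_num [hz, hh_zero]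
    rw [hv, one_mul]
    congr 1
    ext i j
    simp only [Matrix.submatrix_apply, Matrix.of_apply, Fin.val_succ]
    push_cast
    ring_nf
  · intro i _ hi
    have hiv : 0 < i.val := Fin.pos_of_ne_zero hi
    simp only [Matrix.of_apply, hz, Fin.val_zero, Nat.cast_zero]
    rw [if_neg]
    · ring
    · rintro ⟨-, -, h3⟩
      push_cast at h3
      omega
  · intro h
    simp at h
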